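/- arXiv:2106.02919 — 2 statements merged into one kernel-verified Lean document; each statement's English description precedes it below -/
import Mathlib

section
/- Let G be a connected cubic simple graph with n vertices and m = 3n/2 edges, m even, and let N be a perfect matching of the line graph L(G). Then the n/4 subgraphs G_v of M(G) (over vertices v such that G_v contains no edge of N) are pairwise vertex-disjoint complete subgraphs on four vertices of M(G). -/
variable {V : Type*}

/-- The vertex-edge graph (middle graph) of `G`: vertices are `V(G) ⊕ E(G)`;
two `e`-vertices are adjacent iff the corresponding edges of `G` are distinct and share
an endpoint; a `v`-vertex and an `e`-vertex are adjacent iff the vertex is an endpoint of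
the edge; no two `v`-vertices are adjacent. -/
def middleGraph (G : SimpleGraph V) : SimpleGraph (V ⊕ G.edgeSet) where
  Adj a b :=
    match a, b with
    | Sum.inl _, Sum.inl _ => False
    | Sum.inl u, Sum.inr e => u ∈ (e : Sym2 V)
    | Sum.inr e, Sum.inl u => u ∈ (e : Sym2 V)
    | Sum.inr e, Sum.inr f => e ≠ f ∧ ∃ v, v ∈ (e : Sym2 V) ∧ v ∈ (f : Sym2 V)
  symm := by
    refine ⟨?_⟩
    rintro (u | e) (v | f) h
    · exact h.elim
    · exact h
    · exact h
    · exact ⟨h.1.symm, h.2.imp fun v hv => ⟨hv.2, hv.1⟩⟩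
  loopless := by
    refine ⟨?_⟩
    rintro (u | e) h
    · exact h
    · exact h.1 rfl

/-- The line graph of `G`, with vertex set the edge set of `G`; two edges are adjacent
iff they are distinct and share an endpoint. -/
def lineGraph (G : SimpleGraph V) : SimpleGraph G.edgeSet where
  Adj e f := e ≠ f ∧ ∃ v, v ∈ (e : Sym2 V) ∧ v ∈ (f : Sym2 V)
  symm := ⟨fun e f h => ⟨h.1.symm, h.2.imp fun v hv => ⟨hv.2, hv.1⟩⟩⟩
  loopless := ⟨fun e h => h.1 rfl⟩

/-- `P` is a perfect matching (dimer covering) of `H`, viewed as a set of edges: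
all members are edges of `H`, distinct members share no vertex, and every vertex of `H`
lies in some member. -/
def IsPerfMatchSet {W : Type*} (H : SimpleGraph W) (P : Set (Sym2 W)) : Prop :=
  P ⊆ H.edgeSet ∧
  (∀ p ∈ P, ∀ q ∈ P, p ≠ q → ∀ a, a ∈ p → a ∉ q) ∧
  (∀ w : W, ∃ p ∈ P, w ∈ p)

/-- The number of perfect matchings (dimer coverings) of `H`. -/
noncomputable def pmCount {W : Type*} (H : SimpleGraph W) : ℕ :=
  {P : Set (Sym2 W) | IsPerfMatchSet H P}.ncard

/-- For a vertex `v` of `G`, the set of vertices of the middle graph `M(G)` consisting of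
the `v`-vertex `v` together with the `e`-vertices corresponding to the edges of `G`
incident with `v`.  For a cubic graph this induces a `K₄` in `M(G)`, denoted `G_v`. -/
def K4set (G : SimpleGraph V) (v : V) : Set (V ⊕ G.edgeSet) :=
  {a | a = Sum.inl v ∨ ∃ e : G.edgeSet, v ∈ (e : Sym2 V) ∧ a = Sum.inr e}

/-- Given a set `N` of edges of the line graph of `G`, the set of vertices `v` of `G`
such that the `K₄`-subgraph `G_v` of `M(G)` contains no edge of `N`, i.e. no member of
`N` has both endpoints incident with `v`. -/
def badSet (G : SimpleGraph V) (N : Set (Sym2 G.edgeSet)) : Set V :=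
  {v | ∀ p ∈ N, ¬ ∀ x ∈ p, v ∈ (x : Sym2 V)}

lemma lineGraph_adj (G : SimpleGraph V) (e f : G.edgeSet) :
    (lineGraph G).Adj e f ↔ e ≠ f ∧ ∃ v, v ∈ (e : Sym2 V) ∧ v ∈ (f : Sym2 V) := Iff.rfl

lemma pair_rep {α : Type*} (p : Sym2 α) : ∃ a b, p = s(a, b) :=
  ⟨p.out.1, p.out.2, by rw [Sym2.mk, p.out_eq]⟩

lemma incident_ncard [Fintype V] [DecidableEq V] (G : SimpleGraph V) [DecidableRel G.Adj]
    (hcubic : G.IsRegularOfDegree 3) (v : V) :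
    {e : G.edgeSet | v ∈ (e : Sym2 V)}.ncard = 3 := by
  have h1 : (Subtype.val '' {e : G.edgeSet | v ∈ (e : Sym2 V)}) = G.incidenceSet v := by
    ext x
    simp [SimpleGraph.incidenceSet, Set.mem_image]
    aesop
  have h2 : {e : G.edgeSet | v ∈ (e : Sym2 V)}.ncard = (G.incidenceSet v).ncard := by
    rw [← h1, Set.ncard_image_of_injective _ Subtype.val_injective]
  rw [h2, Set.ncard_eq_toFinset_card', Set.toFinset_card,
    SimpleGraph.card_incidenceSet_eq_degree]
  exact hcubic v

lemma meet_exists_unique (G : SimpleGraph V) {N : Set (Sym2 G.edgeSet)}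
    (hsub : N ⊆ (lineGraph G).edgeSet) {p : Sym2 G.edgeSet} (hp : p ∈ N) :
    ∃! v : V, ∀ x ∈ p, v ∈ (x : Sym2 V) := by
  obtain ⟨e, f, rfl⟩ := pair_rep p
  obtain ⟨hne, u, hue, huf⟩ :=
    (lineGraph_adj G e f).mp ((SimpleGraph.mem_edgeSet (G := lineGraph G)).mp (hsub hp))
  refine ⟨u, ?_, ?_⟩
  · intro x hx
    rcases Sym2.mem_iff.mp hx with rfl | rfl
    · exact hue
    · exact huf
  · intro v hv
    have hve := hv e (Sym2.mem_mk_left e f)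
    have hvf := hv f (Sym2.mem_mk_right e f)
    by_contra hvu
    have h1 : (e : Sym2 V) = s(v, u) := (Sym2.mem_and_mem_iff hvu).mp ⟨hve, hue⟩
    have h2 : (f : Sym2 V) = s(v, u) := (Sym2.mem_and_mem_iff hvu).mp ⟨hvf, huf⟩
    exact hne (Subtype.ext (h1.trans h2.symm))

lemma K4set_eq (G : SimpleGraph V) (v : V) :
    K4set G v = insert (Sum.inl v) (Sum.inr '' {e : G.edgeSet | v ∈ (e : Sym2 V)}) := by
  ext a
  simp only [K4set, Set.mem_setOf_eq, Set.mem_insert_iff, Set.mem_image]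
  aesop

/-- Let `G` be a connected cubic graph with `n` vertices and an even
number of edges, and `N` a perfect matching of `L(G)`.  Then there are exactly `n/4`
vertices `v` whose `K₄`-subgraph `G_v` contains no edge of `N`, and the corresponding
subgraphs `G_v` are complete on four vertices and pairwise vertex-disjoint. -/
theorem line_graph_pm_empty_K4_disjoint {V : Type*} [Fintype V] [DecidableEq V]
    (G : SimpleGraph V) [DecidableRel G.Adj]
    (hconn : G.Connected) (hcubic : G.IsRegularOfDegree 3)
    (heven : Even G.edgeFinset.card)
    (N : Set (Sym2 G.edgeSet)) (hN : IsPerfMatchSet (lineGraph G) N) :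
    (badSet G N).ncard = Fintype.card V / 4 ∧
    (∀ v ∈ badSet G N, (K4set G v).ncard = 4 ∧
      ∀ a ∈ K4set G v, ∀ b ∈ K4set G v, a ≠ b → (middleGraph G).Adj a b) ∧
    (∀ v ∈ badSet G N, ∀ w ∈ badSet G N, v ≠ w →
      Disjoint (K4set G v) (K4set G w)) := by
  classical
  haveI : Nonempty V := hconn.nonempty
  obtain ⟨hsub, hdisj, hcov⟩ := hN
  -- clique part
  have hclique : ∀ v : V, (K4set G v).ncard = 4 ∧
      ∀ a ∈ K4set G v, ∀ b ∈ K4set G v, a ≠ b → (middleGraph G).Adj a b := by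
    intro v
    constructor
    · rw [K4set_eq, Set.ncard_insert_of_notMem (by simp) (Set.toFinite _),
        Set.ncard_image_of_injective _ Sum.inr_injective, incident_ncard G hcubic v]
    · rintro a ha b hb hab
      rcases ha with rfl | ⟨e, hve, rfl⟩ <;> rcases hb with rfl | ⟨f, hvf, rfl⟩
      · exact absurd rfl hab
      · exact hvf
      · exact hve
      · exact ⟨fun h => hab (congrArg _ h), v, hve, hvf⟩
  -- two bad vertices never lie on a common edge
  have hbadnadj : ∀ v ∈ badSet G N, ∀ w ∈ badSet G N, v ≠ w →
      ∀ e : G.edgeSet, v ∈ (e : Sym2 V) → w ∈ (e : Sym2 V) → False := by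
    intro v hv w hw hvw e hve hwe
    obtain ⟨p, hp, hep⟩ := hcov e
    obtain ⟨a, b, rfl⟩ := pair_rep p
    obtain ⟨hne, u, hua, hub⟩ :=
      (lineGraph_adj G a b).mp ((SimpleGraph.mem_edgeSet (G := lineGraph G)).mp (hsub hp))
    have hue : u ∈ (e : Sym2 V) := by
      rcases Sym2.mem_iff.mp hep with rfl | rfl
      · exact hua
      · exact hub
    have he2 : (e : Sym2 V) = s(v, w) := (Sym2.mem_and_mem_iff hvw).mp ⟨hve, hwe⟩
    have hall : ∀ x ∈ s(a, b), u ∈ (x : Sym2 V) := by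
      intro x hx
      rcases Sym2.mem_iff.mp hx with rfl | rfl
      · exact hua
      · exact hub
    rcases Sym2.mem_iff.mp (he2 ▸ hue) with rfl | rfl
    · exact hv _ hp hall
    · exact hw _ hp hall
  refine ⟨?_, fun v _ => hclique v, ?_⟩
  · -- counting
    set φ : Sym2 G.edgeSet → V := fun p =>
      if h : ∃ v : V, ∀ x ∈ p, v ∈ (x : Sym2 V) then h.choose else Classical.arbitrary V
      with hφdef
    have hφ : ∀ p ∈ N, ∀ x ∈ p, φ p ∈ (x : Sym2 V) := by
      intro p hp
      have h : ∃ v : V, ∀ x ∈ p, v ∈ (x : Sym2 V) := (meet_exists_unique G hsub hp).exists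
      intro x hx
      rw [show φ p = h.choose from dif_pos h]
      exact h.choose_spec x hx
    have good_def : (badSet G N)ᶜ = {v | ∃ p ∈ N, ∀ x ∈ p, v ∈ (x : Sym2 V)} := by
      ext v
      simp only [badSet, Set.mem_compl_iff, Set.mem_setOf_eq]
      push_neg
      rfl
    have hbij : Set.BijOn φ N (badSet G N)ᶜ := by
      refine ⟨fun p hp => ?_, fun p hp q hq hpq => ?_, fun v hv => ?_⟩
      · rw [good_def]; exact ⟨p, hp, hφ p hp⟩
      · by_contra hne
        obtain ⟨a, b, hpab⟩ := pair_rep p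
        obtain ⟨c, d, hqcd⟩ := pair_rep q
        have hab : a ≠ b :=
          ((lineGraph_adj G a b).mp ((SimpleGraph.mem_edgeSet (G := lineGraph G)).mp
            (hsub (hpab ▸ hp)))).1
        have hcd : c ≠ d :=
          ((lineGraph_adj G c d).mp ((SimpleGraph.mem_edgeSet (G := lineGraph G)).mp
            (hsub (hqcd ▸ hq)))).1
        have hanq : a ∉ q := hdisj p hp q hq hne a (hpab ▸ Sym2.mem_mk_left a b)
        have hbnq : b ∉ q := hdisj p hp q hq hne b (hpab ▸ Sym2.mem_mk_right a b)
        have hac : a ≠ c := fun h => hanq (hqcd ▸ (h ▸ Sym2.mem_mk_left c d))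
        have had : a ≠ d := fun h => hanq (hqcd ▸ (h ▸ Sym2.mem_mk_right c d))
        have hbc : b ≠ c := fun h => hbnq (hqcd ▸ (h ▸ Sym2.mem_mk_left c d))
        have hbd : b ≠ d := fun h => hbnq (hqcd ▸ (h ▸ Sym2.mem_mk_right c d))
        set v := φ p with hv
        have hva : v ∈ (a : Sym2 V) := hφ p hp a (hpab ▸ Sym2.mem_mk_left a b)
        have hvb : v ∈ (b : Sym2 V) := hφ p hp b (hpab ▸ Sym2.mem_mk_right a b)
        have hvc : v ∈ (c : Sym2 V) := hpq ▸ hφ q hq c (hqcd ▸ Sym2.mem_mk_left c d)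
        have hvd : v ∈ (d : Sym2 V) := hpq ▸ hφ q hq d (hqcd ▸ Sym2.mem_mk_right c d)
        have hS3 : {e : G.edgeSet | v ∈ (e : Sym2 V)}.toFinset.card = 3 := by
          rw [← Set.ncard_eq_toFinset_card']; exact incident_ncard G hcubic v
        have hsub4 : ({a, b, c, d} : Finset G.edgeSet) ⊆
            {e : G.edgeSet | v ∈ (e : Sym2 V)}.toFinset := by
          intro x hx
          simp only [Finset.mem_insert, Finset.mem_singleton] at hx
          rw [Set.mem_toFinset]
          rcases hx with rfl | rfl | rfl | rfl
          exacts [hva, hvb, hvc, hvd]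
        have hcard4 : ({a, b, c, d} : Finset G.edgeSet).card = 4 := by
          rw [Finset.card_insert_of_notMem (by simp [hab, hac, had]),
            Finset.card_insert_of_notMem (by simp [hbc, hbd]),
            Finset.card_insert_of_notMem (by simp [hcd]), Finset.card_singleton]
        have := Finset.card_le_card hsub4
        omega
      · rw [good_def] at hv
        obtain ⟨p, hp, hvp⟩ := hv
        exact ⟨p, hp, (meet_exists_unique G hsub hp).unique (hφ p hp) hvp⟩
    have hgood : ((badSet G N)ᶜ).ncard = N.ncard := by
      rw [← hbij.image_eq, Set.ncard_image_of_injOn hbij.injOn]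
    -- N.ncard : 2 * |N| = number of edges
    set ψ : G.edgeSet → Sym2 G.edgeSet := fun e => (hcov e).choose with hψdef
    have hψN : ∀ e, ψ e ∈ N := fun e => (hcov e).choose_spec.1
    have hψmem : ∀ e, e ∈ ψ e := fun e => (hcov e).choose_spec.2
    have hmaps : ∀ e : G.edgeSet, e ∈ (Finset.univ : Finset G.edgeSet) → ψ e ∈ N.toFinset :=
      fun e _ => Set.mem_toFinset.mpr (hψN e)
    have hcount := Finset.card_eq_sum_card_fiberwise hmaps
    have fiber2 : ∀ p ∈ N.toFinset,
        (Finset.univ.filter fun e => ψ e = p).card = 2 := by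
      intro p hp
      rw [Set.mem_toFinset] at hp
      obtain ⟨a, b, rfl⟩ := pair_rep p
      have hab : a ≠ b :=
        ((lineGraph_adj G a b).mp ((SimpleGraph.mem_edgeSet (G := lineGraph G)).mp
          (hsub hp))).1
      have : (Finset.univ.filter fun e => ψ e = s(a, b)) = {a, b} := by
        ext e
        simp only [Finset.mem_filter, Finset.mem_univ, true_and, Finset.mem_insert,
          Finset.mem_singleton]
        constructor
        · intro h
          exact Sym2.mem_iff.mp (h ▸ hψmem e)
        · intro h
          have hememp : e ∈ s(a, b) := Sym2.mem_iff.mpr h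
          by_contra hne
          exact hdisj (ψ e) (hψN e) s(a, b) hp hne e (hψmem e) hememp
      rw [this, Finset.card_insert_of_notMem (by simp [hab]), Finset.card_singleton]
    have hcard2 : Fintype.card G.edgeSet = 2 * N.toFinset.card := by
      rw [← Finset.card_univ, hcount, Finset.sum_congr rfl fiber2, Finset.sum_const,
        smul_eq_mul, Nat.mul_comm]
    have hNcard : N.ncard = N.toFinset.card := Set.ncard_eq_toFinset_card' N
    -- handshake
    have hhs := G.sum_degrees_eq_twice_card_edges
    have hsum : ∑ v : V, G.degree v = Fintype.card V * 3 := by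
      rw [Finset.sum_congr rfl fun v _ => hcubic v, Finset.sum_const, smul_eq_mul,
        Finset.card_univ]
    have hm : G.edgeFinset.card = Fintype.card G.edgeSet := SimpleGraph.edgeFinset_card
    obtain ⟨k, hk⟩ := heven
    have hcompl : (badSet G N).ncard + ((badSet G N)ᶜ).ncard = Fintype.card V := by
      rw [Set.ncard_add_ncard_compl, Nat.card_eq_fintype_card]
    omega
  · -- disjointness
    intro v hv w hw hvw
    rw [Set.disjoint_left]
    rintro a (rfl | ⟨e, hve, rfl⟩) hb
    · rcases hb with h | ⟨e, _, h⟩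
      · exact hvw (Sum.inl_injective h)
      · exact Sum.inl_ne_inr h
    · rcases hb with h | ⟨f, hwf, h⟩
      · exact Sum.inr_ne_inl h
      · exact hbadnadj v hv w hw hvw e hve (Sum.inr_injective h ▸ hwf)
end

section
/- Let G be a connected cubic simple graph with n vertices and m = 3n/2 edges, m even, and let M* be any perfect matching of the vertex-edge graph M(G). Then M* contains exactly n/4 edges whose two endpoints are both e-vertices (edges of G) and exactly n edges joining a v-vertex (vertex of G) to an e-vertex. Moreover, exactly n/4 of the n K4-subgraphs G_v of M(G) contain exactly two edges of M*, and the remaining 3n/4 of them contain exactly one edge of M*. -/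
variable {V : Type*}

lemma mG_adj_rr (G : SimpleGraph V) (e f : G.edgeSet) :
    (middleGraph G).Adj (Sum.inr e) (Sum.inr f) ↔
      e ≠ f ∧ ∃ v, v ∈ (e : Sym2 V) ∧ v ∈ (f : Sym2 V) := Iff.rfl

lemma K4_inl (G : SimpleGraph V) (v u : V) :
    (Sum.inl u : V ⊕ G.edgeSet) ∈ K4set G v ↔ u = v := by
  simp [K4set]

lemma K4_inr (G : SimpleGraph V) (v : V) (e : G.edgeSet) :
    (Sum.inr e : V ⊕ G.edgeSet) ∈ K4set G v ↔ v ∈ (e : Sym2 V) := by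
  simp [K4set]

lemma shape_lemma (G : SimpleGraph V) {p} (hp : p ∈ (middleGraph G).edgeSet) :
    (∃ (v : V) (e : G.edgeSet), p = s(Sum.inl v, Sum.inr e) ∧ v ∈ (e : Sym2 V)) ∨
    (∃ e f : G.edgeSet, p = s(Sum.inr e, Sum.inr f) ∧ e ≠ f ∧
      ∃ v, v ∈ (e : Sym2 V) ∧ v ∈ (f : Sym2 V)) := by
  induction p using Sym2.ind with
  | _ a b =>
    rw [SimpleGraph.mem_edgeSet] at hp
    match a, b with
    | Sum.inl u, Sum.inl w => exact hp.elim
    | Sum.inl u, Sum.inr e => exact Or.inl ⟨u, e, rfl, hp⟩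
    | Sum.inr e, Sum.inl u => exact Or.inl ⟨u, e, Sym2.eq_swap, hp⟩
    | Sum.inr e, Sum.inr f => exact Or.inr ⟨e, f, rfl, hp⟩

lemma common_unique (G : SimpleGraph V) {e f : G.edgeSet} (hef : e ≠ f) {v w : V}
    (h1 : v ∈ (e : Sym2 V)) (h2 : v ∈ (f : Sym2 V)) (h3 : w ∈ (e : Sym2 V))
    (h4 : w ∈ (f : Sym2 V)) : v = w := by
  by_contra hvw
  apply hef
  apply Subtype.ext
  rw [(Sym2.mem_and_mem_iff hvw).mp ⟨h1, h3⟩, (Sym2.mem_and_mem_iff hvw).mp ⟨h2, h4⟩]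

lemma four_incident_false [Fintype V] [DecidableEq V] (G : SimpleGraph V) [DecidableRel G.Adj]
    (hcubic : G.IsRegularOfDegree 3) (v : V) {e1 e2 e3 e4 : G.edgeSet}
    (h12 : e1 ≠ e2) (h13 : e1 ≠ e3) (h14 : e1 ≠ e4) (h23 : e2 ≠ e3) (h24 : e2 ≠ e4)
    (h34 : e3 ≠ e4) (m1 : v ∈ (e1 : Sym2 V)) (m2 : v ∈ (e2 : Sym2 V))
    (m3 : v ∈ (e3 : Sym2 V)) (m4 : v ∈ (e4 : Sym2 V)) : False := by
  classical
  have himg : (Finset.univ.filter fun e : G.edgeSet => v ∈ (e : Sym2 V)).image Subtype.val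
      = G.incidenceFinset v := by
    ext x
    simp only [Finset.mem_image, Finset.mem_filter, Finset.mem_univ, true_and,
      SimpleGraph.mem_incidenceFinset, SimpleGraph.incidenceSet]
    constructor
    · rintro ⟨e, he, rfl⟩; exact ⟨e.2, he⟩
    · rintro ⟨hx, hv⟩; exact ⟨⟨x, hx⟩, hv, rfl⟩
  have hcard : (Finset.univ.filter fun e : G.edgeSet => v ∈ (e : Sym2 V)).card = 3 := by
    rw [← Finset.card_image_of_injective _ Subtype.val_injective, himg,
      SimpleGraph.card_incidenceFinset_eq_degree, hcubic v]
  have hsub : ({e1, e2, e3, e4} : Finset G.edgeSet) ⊆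
      Finset.univ.filter fun e : G.edgeSet => v ∈ (e : Sym2 V) := by
    intro x hx
    simp only [Finset.mem_insert, Finset.mem_singleton] at hx
    rcases hx with rfl | rfl | rfl | rfl <;> simp [m1, m2, m3, m4]
  have h4c : ({e1, e2, e3, e4} : Finset G.edgeSet).card = 4 := by
    rw [Finset.card_insert_of_notMem (by simp [h12, h13, h14]),
      Finset.card_insert_of_notMem (by simp [h23, h24]), Finset.card_pair h34]
  have := Finset.card_le_card hsub
  omega


/-- Let `G` be a connected cubic graph with `n` vertices and an even
number of edges, and `P` a perfect matching of `M(G)`.  Then `P` has exactly `n/4` edges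
joining two `e`-vertices and exactly `n` edges joining a `v`-vertex to an `e`-vertex;
moreover exactly `n/4` of the `K₄`-subgraphs `G_v` contain exactly two edges of `P` and
the remaining `3n/4` contain exactly one edge of `P`. -/
theorem middle_graph_pm_structure {V : Type*} [Fintype V] [DecidableEq V]
    (G : SimpleGraph V) [DecidableRel G.Adj]
    (hconn : G.Connected) (hcubic : G.IsRegularOfDegree 3)
    (heven : Even G.edgeFinset.card)
    (P : Set (Sym2 (V ⊕ G.edgeSet))) (hP : IsPerfMatchSet (middleGraph G) P) :
    {p ∈ P | ∀ a ∈ p, ∃ e : G.edgeSet, a = Sum.inr e}.ncard = Fintype.card V / 4 ∧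
    {p ∈ P | ∃ (v : V) (e : G.edgeSet), p = s(Sum.inl v, Sum.inr e)}.ncard =
      Fintype.card V ∧
    {v : V | {p ∈ P | ∀ a ∈ p, a ∈ K4set G v}.ncard = 2}.ncard =
      Fintype.card V / 4 ∧
    {v : V | {p ∈ P | ∀ a ∈ p, a ∈ K4set G v}.ncard = 1}.ncard =
      3 * Fintype.card V / 4 := by
  classical
  obtain ⟨hPsub, hPdisj, hPcov⟩ := hP
  have huniq : ∀ p ∈ P, ∀ q ∈ P, ∀ a : V ⊕ G.edgeSet, a ∈ p → a ∈ q → p = q := by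
    intro p hp q hq a hap haq
    by_contra hne
    exact hPdisj p hp q hq hne a hap haq
  set ψ : (V ⊕ G.edgeSet) → Sym2 (V ⊕ G.edgeSet) := fun a => (hPcov a).choose with hψdef
  have hψmem : ∀ a, ψ a ∈ P := fun a => (hPcov a).choose_spec.1
  have hψin : ∀ a, a ∈ ψ a := fun a => (hPcov a).choose_spec.2
  have hψeq : ∀ (a : V ⊕ G.edgeSet) (p), p ∈ P → a ∈ p → ψ a = p := fun a p hp hap =>
    huniq _ (hψmem a) p hp a (hψin a) hap
  set A : Set (Sym2 (V ⊕ G.edgeSet)) :=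
    {p ∈ P | ∀ a ∈ p, ∃ e : G.edgeSet, a = Sum.inr e} with hAdef
  set B : Set (Sym2 (V ⊕ G.edgeSet)) :=
    {p ∈ P | ∃ (v : V) (e : G.edgeSet), p = s(Sum.inl v, Sum.inr e)} with hBdef
  -- shapes
  have hApair : ∀ p ∈ A, ∃ e f : G.edgeSet, p = s(Sum.inr e, Sum.inr f) ∧ e ≠ f ∧
      ∃ v, v ∈ (e : Sym2 V) ∧ v ∈ (f : Sym2 V) := by
    rintro p ⟨hp, hall⟩
    rcases shape_lemma G (hPsub hp) with ⟨v, e, rfl, -⟩ | ⟨e, f, rfl, hef, hcom⟩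
    · obtain ⟨e', he'⟩ := hall (Sum.inl v) (Sym2.mem_mk_left _ _)
      exact absurd he' (by simp)
    · exact ⟨e, f, rfl, hef, hcom⟩
  have hAmem : ∀ (e f : G.edgeSet), s(Sum.inr e, Sum.inr f) ∈ P →
      s(Sum.inr e, Sum.inr f) ∈ A := by
    intro e f hp
    refine ⟨hp, fun a ha => ?_⟩
    rcases Sym2.mem_iff.mp ha with rfl | rfl
    exacts [⟨e, rfl⟩, ⟨f, rfl⟩]
  have hPsplit : ∀ p ∈ P, p ∈ A ∨ p ∈ B := by
    intro p hp
    rcases shape_lemma G (hPsub hp) with ⟨v, e, rfl, -⟩ | ⟨e, f, rfl, -, -⟩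
    · exact Or.inr ⟨hp, v, e, rfl⟩
    · exact Or.inl (hAmem e f hp)
  have hABdisj : ∀ p, p ∈ A → p ∉ B := by
    rintro p hpA ⟨-, v, e, rfl⟩
    obtain ⟨e', he'⟩ := hpA.2 (Sum.inl v) (Sym2.mem_mk_left _ _)
    exact absurd he' (by simp)
  -- B has cardinality n
  have hBrange : B = Set.range fun v : V => ψ (Sum.inl v) := by
    ext p
    constructor
    · rintro ⟨hp, v, e, rfl⟩
      exact ⟨v, hψeq (Sum.inl v) _ hp (Sym2.mem_mk_left _ _)⟩
    · rintro ⟨v, rfl⟩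
      have hp := hψmem (Sum.inl v)
      rcases shape_lemma G (hPsub hp) with ⟨u, e, hpe, -⟩ | ⟨e, f, hpe, -, -⟩
      · exact ⟨hp, u, e, hpe⟩
      · have hv := hψin (Sum.inl v)
        rw [hpe, Sym2.mem_iff] at hv
        rcases hv with h | h <;> simp at h
  have hpv : ∀ v : V, ∃ e : G.edgeSet,
      ψ (Sum.inl v) = s(Sum.inl v, Sum.inr e) ∧ v ∈ (e : Sym2 V) := by
    intro v
    have hv := hψin (Sum.inl v)
    rcases shape_lemma G (hPsub (hψmem (Sum.inl v))) with ⟨u, e, hpe, hu⟩ | ⟨e, f, hpe, -, -⟩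
    · rw [hpe, Sym2.mem_iff] at hv
      rcases hv with h | h
      · obtain rfl : v = u := by injection h
        exact ⟨e, hpe, hu⟩
      · exact absurd h (by simp)
    · rw [hpe, Sym2.mem_iff] at hv
      rcases hv with h | h <;> exact absurd h (by simp)
  have hinj : Function.Injective fun v : V => ψ (Sum.inl v) := by
    intro v w h
    obtain ⟨e, hpe, -⟩ := hpv v
    have h' : ψ (Sum.inl v) = ψ (Sum.inl w) := h
    have hw := hψin (Sum.inl w)
    rw [← h', hpe, Sym2.mem_iff] at hw
    rcases hw with h' | h'
    · injection h' with h''; exact h''.symm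
    · exact absurd h' (by simp)
  have hBcard : B.ncard = Fintype.card V := by
    rw [hBrange, ← Set.image_univ, Set.ncard_image_of_injective _ hinj, Set.ncard_univ,
      Nat.card_eq_fintype_card]
  -- the fiber count: |E(G)| = 2|A| + |B|
  have hAfin := A.toFinite
  have hBfin := B.toFinite
  have hPfin := P.toFinite
  have hkey : ∀ (x : G.edgeSet) (p), p ∈ P → (ψ (Sum.inr x) = p ↔ Sum.inr x ∈ p) :=
    fun x p hp => ⟨fun h => h ▸ hψin _, fun h => hψeq _ p hp h⟩
  have hcount : Fintype.card G.edgeSet = 2 * A.ncard + B.ncard := by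
    have hfib : Fintype.card G.edgeSet = ∑ p ∈ hPfin.toFinset,
        (Finset.univ.filter fun e : G.edgeSet => ψ (Sum.inr e) = p).card := by
      rw [← Finset.card_univ]
      apply Finset.card_eq_sum_card_fiberwise
      intro e _
      rw [Finset.mem_coe, Set.Finite.mem_toFinset]
      exact hψmem _
    have hunion : hPfin.toFinset = hAfin.toFinset ∪ hBfin.toFinset := by
      ext p
      simp only [Set.Finite.mem_toFinset, Finset.mem_union]
      constructor
      · exact hPsplit p
      · rintro (h | h)
        exacts [h.1, h.1]
    have hdisj : Disjoint hAfin.toFinset hBfin.toFinset := by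
      rw [Finset.disjoint_left]
      intro p hp hq
      rw [Set.Finite.mem_toFinset] at hp hq
      exact hABdisj p hp hq
    have hsumA : ∀ p ∈ hAfin.toFinset,
        (Finset.univ.filter fun e : G.edgeSet => ψ (Sum.inr e) = p).card = 2 := by
      intro p hp
      rw [Set.Finite.mem_toFinset] at hp
      obtain ⟨e, f, rfl, hef, -⟩ := hApair p hp
      have : (Finset.univ.filter fun x : G.edgeSet =>
          ψ (Sum.inr x) = s(Sum.inr e, Sum.inr f)) = {e, f} := by
        ext x
        simp only [Finset.mem_filter, Finset.mem_univ, true_and, Finset.mem_insert,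
          Finset.mem_singleton]
        rw [hkey x _ hp.1]
        simp [Sym2.mem_iff]
      rw [this, Finset.card_pair hef]
    have hsumB : ∀ p ∈ hBfin.toFinset,
        (Finset.univ.filter fun e : G.edgeSet => ψ (Sum.inr e) = p).card = 1 := by
      intro p hp
      rw [Set.Finite.mem_toFinset] at hp
      obtain ⟨hpP, v, e, rfl⟩ := hp
      have : (Finset.univ.filter fun x : G.edgeSet =>
          ψ (Sum.inr x) = s(Sum.inl v, Sum.inr e)) = {e} := by
        ext x
        simp only [Finset.mem_filter, Finset.mem_univ, true_and, Finset.mem_singleton]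
        rw [hkey x _ hpP]
        simp [Sym2.mem_iff]
      rw [this, Finset.card_singleton]
    rw [hfib, hunion, Finset.sum_union hdisj, Finset.sum_congr rfl hsumA,
      Finset.sum_congr rfl hsumB, Finset.sum_const, Finset.sum_const, smul_eq_mul,
      smul_eq_mul, mul_one, Set.ncard_eq_toFinset_card A hAfin,
      Set.ncard_eq_toFinset_card B hBfin, mul_comm]
  -- degree sum
  have hdeg : 3 * Fintype.card V = 2 * G.edgeFinset.card := by
    have h := G.sum_degrees_eq_twice_card_edges
    rw [Finset.sum_congr rfl fun v _ => hcubic v, Finset.sum_const, smul_eq_mul,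
      Finset.card_univ, mul_comm] at h
    exact h
  have hEcard : Fintype.card G.edgeSet = G.edgeFinset.card := by
    rw [SimpleGraph.edgeFinset, Set.toFinset_card]
  obtain ⟨t, ht⟩ := heven
  -- K4 analysis
  have hSeq : ∀ v : V, {p ∈ P | ∀ a ∈ p, a ∈ K4set G v} = insert (ψ (Sum.inl v))
      {p ∈ P | ∃ e f : G.edgeSet, p = s(Sum.inr e, Sum.inr f) ∧
        v ∈ (e : Sym2 V) ∧ v ∈ (f : Sym2 V)} := by
    intro v
    obtain ⟨e0, hpe0, hve0⟩ := hpv v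
    ext p
    simp only [Set.mem_insert_iff, Set.mem_setOf_eq]
    constructor
    · rintro ⟨hp, hK⟩
      rcases shape_lemma G (hPsub hp) with ⟨u, e, rfl, -⟩ | ⟨e, f, rfl, -, -⟩
      · have hu := (K4_inl G v u).mp (hK (Sum.inl u) (Sym2.mem_mk_left _ _))
        subst hu
        exact Or.inl (hψeq (Sum.inl u) _ hp (Sym2.mem_mk_left _ _)).symm
      · refine Or.inr ⟨hp, e, f, rfl, ?_, ?_⟩
        · exact (K4_inr G v e).mp (hK (Sum.inr e) (Sym2.mem_mk_left _ _))
        · exact (K4_inr G v f).mp (hK (Sum.inr f) (Sym2.mem_mk_right _ _))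
    · rintro (rfl | ⟨hp, e, f, rfl, hv1, hv2⟩)
      · refine ⟨hψmem _, fun a ha => ?_⟩
        rw [hpe0, Sym2.mem_iff] at ha
        rcases ha with rfl | rfl
        · exact (K4_inl G v v).mpr rfl
        · exact (K4_inr G v e0).mpr hve0
      · refine ⟨hp, fun a ha => ?_⟩
        rcases Sym2.mem_iff.mp ha with rfl | rfl
        · exact (K4_inr G v e).mpr hv1
        · exact (K4_inr G v f).mpr hv2
  have hpvnot : ∀ v : V, ψ (Sum.inl v) ∉
      {p ∈ P | ∃ e f : G.edgeSet, p = s(Sum.inr e, Sum.inr f) ∧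
        v ∈ (e : Sym2 V) ∧ v ∈ (f : Sym2 V)} := by
    intro v
    obtain ⟨e0, hpe0, -⟩ := hpv v
    rintro ⟨-, e, f, heq, -, -⟩
    rw [hpe0] at heq
    simp [Sym2.eq_iff] at heq
  have hTone : ∀ v : V, ∀ p ∈ {p ∈ P | ∃ e f : G.edgeSet, p = s(Sum.inr e, Sum.inr f) ∧
        v ∈ (e : Sym2 V) ∧ v ∈ (f : Sym2 V)},
      ∀ q ∈ {p ∈ P | ∃ e f : G.edgeSet, p = s(Sum.inr e, Sum.inr f) ∧
        v ∈ (e : Sym2 V) ∧ v ∈ (f : Sym2 V)}, p = q := by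
    rintro v p ⟨hp, e1, e2, rfl, hv1, hv2⟩ q ⟨hq, e3, e4, rfl, hv3, hv4⟩
    by_contra hne
    have h12 : e1 ≠ e2 := ((mG_adj_rr G e1 e2).mp ((SimpleGraph.mem_edgeSet (middleGraph G)).mp (hPsub hp))).1
    have h34 : e3 ≠ e4 := ((mG_adj_rr G e3 e4).mp ((SimpleGraph.mem_edgeSet (middleGraph G)).mp (hPsub hq))).1
    have h13 : e1 ≠ e3 := by
      rintro rfl
      exact hPdisj _ hp _ hq hne _ (Sym2.mem_mk_left _ _) (Sym2.mem_mk_left _ _)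
    have h14 : e1 ≠ e4 := by
      rintro rfl
      exact hPdisj _ hp _ hq hne _ (Sym2.mem_mk_left _ _) (Sym2.mem_mk_right _ _)
    have h23 : e2 ≠ e3 := by
      rintro rfl
      exact hPdisj _ hp _ hq hne _ (Sym2.mem_mk_right _ _) (Sym2.mem_mk_left _ _)
    have h24 : e2 ≠ e4 := by
      rintro rfl
      exact hPdisj _ hp _ hq hne _ (Sym2.mem_mk_right _ _) (Sym2.mem_mk_right _ _)
    exact four_incident_false G hcubic v h12 h13 h14 h23 h24 h34 hv1 hv2 hv3 hv4
  have hSn : ∀ v : V, {p ∈ P | ∀ a ∈ p, a ∈ K4set G v}.ncard =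
      {p ∈ P | ∃ e f : G.edgeSet, p = s(Sum.inr e, Sum.inr f) ∧
        v ∈ (e : Sym2 V) ∧ v ∈ (f : Sym2 V)}.ncard + 1 := by
    intro v
    rw [hSeq v]
    exact Set.ncard_insert_of_notMem (hpvnot v) (Set.toFinite _)
  have hT1 : ∀ v : V, {p ∈ P | ∃ e f : G.edgeSet, p = s(Sum.inr e, Sum.inr f) ∧
        v ∈ (e : Sym2 V) ∧ v ∈ (f : Sym2 V)}.Nonempty →
      {p ∈ P | ∃ e f : G.edgeSet, p = s(Sum.inr e, Sum.inr f) ∧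
        v ∈ (e : Sym2 V) ∧ v ∈ (f : Sym2 V)}.ncard = 1 := by
    rintro v ⟨p, hp⟩
    rw [Set.eq_singleton_iff_unique_mem.mpr ⟨hp, fun q hq => hTone v q hq p hp⟩,
      Set.ncard_singleton]
  have hT01 : ∀ v : V, {p ∈ P | ∃ e f : G.edgeSet, p = s(Sum.inr e, Sum.inr f) ∧
        v ∈ (e : Sym2 V) ∧ v ∈ (f : Sym2 V)}.ncard = 0 ∨
      {p ∈ P | ∃ e f : G.edgeSet, p = s(Sum.inr e, Sum.inr f) ∧
        v ∈ (e : Sym2 V) ∧ v ∈ (f : Sym2 V)}.ncard = 1 := by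
    intro v
    rcases Set.eq_empty_or_nonempty {p ∈ P | ∃ e f : G.edgeSet, p = s(Sum.inr e, Sum.inr f) ∧
        v ∈ (e : Sym2 V) ∧ v ∈ (f : Sym2 V)} with he | hne
    · left; rw [he]; exact Set.ncard_empty _
    · right; exact hT1 v hne
  -- the host map
  have hVne : Nonempty V := hconn.nonempty
  set h : Sym2 (V ⊕ G.edgeSet) → V := fun p =>
    if hp : ∃ v, ∀ a ∈ p, a ∈ K4set G v then hp.choose else Classical.arbitrary V with hhdef
  have hhA : ∀ p ∈ A, ∀ a ∈ p, a ∈ K4set G (h p) := by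
    intro p hpA
    obtain ⟨e, f, rfl, hef, v, hv1, hv2⟩ := hApair p hpA
    have hex : ∃ w, ∀ a ∈ s(Sum.inr e, Sum.inr f), a ∈ K4set G w := by
      refine ⟨v, fun a ha => ?_⟩
      rcases Sym2.mem_iff.mp ha with rfl | rfl
      · exact (K4_inr G v e).mpr hv1
      · exact (K4_inr G v f).mpr hv2
    show ∀ a ∈ s(Sum.inr e, Sum.inr f),
      a ∈ K4set G (if hp : ∃ w, ∀ a ∈ s(Sum.inr e, Sum.inr f), a ∈ K4set G w
        then hp.choose else Classical.arbitrary V)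
    rw [dif_pos hex]
    exact hex.choose_spec
  have hpTA : ∀ p ∈ A, ∀ v : V, (∀ a ∈ p, a ∈ K4set G v) →
      p ∈ {p ∈ P | ∃ e f : G.edgeSet, p = s(Sum.inr e, Sum.inr f) ∧
        v ∈ (e : Sym2 V) ∧ v ∈ (f : Sym2 V)} := by
    intro p hpA v hK
    obtain ⟨e, f, rfl, hef, -⟩ := hApair p hpA
    exact ⟨hpA.1, e, f, rfl, (K4_inr G v e).mp (hK _ (Sym2.mem_mk_left _ _)),
      (K4_inr G v f).mp (hK _ (Sym2.mem_mk_right _ _))⟩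
  have hinjA : Set.InjOn h A := by
    intro p hp q hq hpq
    refine hTone (h p) p (hpTA p hp _ (hhA p hp)) q ?_
    rw [hpq]
    exact hpTA q hq _ (hhA q hq)
  have himage : h '' A = {v : V | {p ∈ P | ∀ a ∈ p, a ∈ K4set G v}.ncard = 2} := by
    ext v
    constructor
    · rintro ⟨p, hpA, rfl⟩
      have hpT := hpTA p hpA _ (hhA p hpA)
      simp only [Set.mem_setOf_eq]
      rw [hSn (h p), hT1 (h p) ⟨p, hpT⟩]
    · intro hv
      simp only [Set.mem_setOf_eq] at hv
      have h1 := hSn v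
      have hTv : {p ∈ P | ∃ e f : G.edgeSet, p = s(Sum.inr e, Sum.inr f) ∧
          v ∈ (e : Sym2 V) ∧ v ∈ (f : Sym2 V)}.ncard = 1 := by omega
      have hne : ({p ∈ P | ∃ e f : G.edgeSet, p = s(Sum.inr e, Sum.inr f) ∧
          v ∈ (e : Sym2 V) ∧ v ∈ (f : Sym2 V)} : Set (Sym2 (V ⊕ G.edgeSet))).Nonempty :=
        Set.nonempty_of_ncard_ne_zero (by omega)
      obtain ⟨p, hpP, e, f, rfl, hv1, hv2⟩ := hne
      have hpA : s(Sum.inr e, Sum.inr f) ∈ A := hAmem e f hpP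
      have hK := hhA _ hpA
      have he : h s(Sum.inr e, Sum.inr f) ∈ (e : Sym2 V) :=
        (K4_inr G _ e).mp (hK _ (Sym2.mem_mk_left _ _))
      have hf : h s(Sum.inr e, Sum.inr f) ∈ (f : Sym2 V) :=
        (K4_inr G _ f).mp (hK _ (Sym2.mem_mk_right _ _))
      have hef : e ≠ f := ((mG_adj_rr G e f).mp ((SimpleGraph.mem_edgeSet (middleGraph G)).mp (hPsub hpP))).1
      exact ⟨_, hpA, common_unique G hef he hf hv1 hv2⟩
  have hAcard : A.ncard = Fintype.card V / 4 := by omega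
  have hW2 : {v : V | {p ∈ P | ∀ a ∈ p, a ∈ K4set G v}.ncard = 2}.ncard = A.ncard := by
    rw [← himage, Set.ncard_image_of_injOn hinjA]
  have hW1set : {v : V | {p ∈ P | ∀ a ∈ p, a ∈ K4set G v}.ncard = 1} =
      {v : V | {p ∈ P | ∀ a ∈ p, a ∈ K4set G v}.ncard = 2}ᶜ := by
    ext v
    simp only [Set.mem_setOf_eq, Set.mem_compl_iff]
    have h1 := hSn v
    have h2 := hT01 v
    omega
  have hcompl := Set.ncard_add_ncard_compl
    {v : V | {p ∈ P | ∀ a ∈ p, a ∈ K4set G v}.ncard = 2} (Set.toFinite _) (Set.toFinite _)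
  rw [Nat.card_eq_fintype_card] at hcompl
  refine ⟨hAcard, hBcard, by rw [hW2]; exact hAcard, ?_⟩
  rw [hW1set]
  omega
end
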